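/- Smoothing size bound: inserting smoothing terms of the form (x ∨ x̄) into a formula with m unique subformulas over n variables increases the number of unique subformulas by a factor of at most O(n); concretely, if every disjunction φ₁ ∨ φ₂ is replaced so that each branch is conjoined with at most n smoothing terms (one per missing variable), the resulting formula has at most m·(2n+1) + 2n unique subformulas. -/
import Mathlib


/-- Negation normal form formulas over variables `V`. -/
inductive NNF (V : Type) : Type where
  | lit : V → Bool → NNF V
  | and : NNF V → NNF V → NNF V
  | or : NNF V → NNF V → NNF V
deriving DecidableEq

namespace NNF

variable {V : Type}

/-- The variables occurring in a formula. -/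
def vars [DecidableEq V] : NNF V → Finset V
  | lit x _ => {x}
  | and f g => vars f ∪ vars g
  | or f g => vars f ∪ vars g

/-- Satisfaction by a total assignment. -/
def sat (α : V → Bool) : NNF V → Bool
  | lit x b => α x == b
  | and f g => sat α f && sat α g
  | or f g => sat α f || sat α g

/-- Smoothness: every disjunction has equal variable sets. -/
def Smooth [DecidableEq V] : NNF V → Prop
  | lit _ _ => True
  | and f g => Smooth f ∧ Smooth g
  | or f g => vars f = vars g ∧ Smooth f ∧ Smooth g

/-- The set of (unique) subformulas of a formula. -/
def subfms [DecidableEq V] : NNF V → Finset (NNF V)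
  | lit x b => {lit x b}
  | and f g => insert (and f g) (subfms f ∪ subfms g)
  | or f g => insert (or f g) (subfms f ∪ subfms g)

/-- Size of a formula represented as a DAG: the number of unique subformulas. -/
def size [DecidableEq V] (φ : NNF V) : ℕ := (subfms φ).card

/-- A smoothing term `x ∨ x̄`. -/
def term (x : V) : NNF V := or (lit x true) (lit x false)

/-- A conjunction chain of smoothing terms over a nonempty list of variables. -/
def chain : V → List V → NNF V
  | x, [] => term x
  | x, y :: ys => and (term x) (chain y ys)

/-- Smoothing: conjoin each disjunction branch with the fixed chain `C`. -/
def sm (C : NNF V) : NNF V → NNF V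
  | lit x b => lit x b
  | and f g => and (sm C f) (sm C g)
  | or f g => or (and C (sm C f)) (and C (sm C g))

/-- Whether a formula contains a disjunction. -/
def hasOr : NNF V → Prop
  | lit _ _ => False
  | and f g => hasOr f ∨ hasOr g
  | or _ _ => True

section lemmas

variable [DecidableEq V]

lemma mem_subfms_self (f : NNF V) : f ∈ subfms f := by
  cases f <;> simp [subfms]

lemma vars_nonempty : ∀ f : NNF V, (vars f).Nonempty
  | lit x b => ⟨x, by simp [vars]⟩
  | and f g => by
    obtain ⟨x, hx⟩ := vars_nonempty f
    exact ⟨x, by simp [vars]; tauto⟩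
  | or f g => by
    obtain ⟨x, hx⟩ := vars_nonempty f
    exact ⟨x, by simp [vars]; tauto⟩

lemma exists_lit_mem (f : NNF V) : ∃ x b, lit x b ∈ subfms f := by
  induction f with
  | lit x b => exact ⟨x, b, by simp [subfms]⟩
  | and f g ihf ihg =>
    obtain ⟨x, b, h⟩ := ihf
    exact ⟨x, b, by simp [subfms]; tauto⟩
  | or f g ihf ihg =>
    obtain ⟨x, b, h⟩ := ihf
    exact ⟨x, b, by simp [subfms]; tauto⟩

lemma smooth_of_not_hasOr : ∀ f : NNF V, ¬ hasOr f → Smooth f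
  | lit x b, _ => trivial
  | and f g, h => ⟨smooth_of_not_hasOr f (fun hf => h (Or.inl hf)),
      smooth_of_not_hasOr g (fun hg => h (Or.inr hg))⟩
  | or f g, h => absurd trivial h

lemma exists_or_mem : ∀ f : NNF V, hasOr f → ∃ a b : NNF V, or a b ∈ subfms f
  | lit _ _, h => absurd h (by simp [hasOr])
  | and f g, h => by
    rcases h with h | h
    · obtain ⟨a, b, hab⟩ := exists_or_mem f h
      exact ⟨a, b, by simp [subfms]; tauto⟩
    · obtain ⟨a, b, hab⟩ := exists_or_mem g h
      exact ⟨a, b, by simp [subfms]; tauto⟩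
  | or f g, _ => ⟨f, g, mem_subfms_self _⟩

lemma vars_term (x : V) : vars (term x) = {x} := by
  simp [term, vars]

lemma smooth_term (x : V) : Smooth (term x) := by
  exact ⟨by simp [vars], trivial, trivial⟩

lemma sat_term (α : V → Bool) (x : V) : sat α (term x) = true := by
  cases hx : α x <;> simp [term, sat, hx]

lemma vars_chain : ∀ (x : V) (L : List V), vars (chain x L) = (x :: L).toFinset
  | x, [] => by simp [chain, vars_term]
  | x, y :: ys => by
    simp only [chain, vars, vars_term, vars_chain y ys, List.toFinset_cons]
    ext a
    simp
    tauto

lemma smooth_chain : ∀ (x : V) (L : List V), Smooth (chain x L)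
  | x, [] => smooth_term x
  | x, y :: ys => ⟨smooth_term x, smooth_chain y ys⟩

lemma sat_chain (α : V → Bool) : ∀ (x : V) (L : List V), sat α (chain x L) = true
  | x, [] => sat_term α x
  | x, y :: ys => by
    simp [chain, sat, sat_term, sat_chain α y ys]

lemma card_subfms_term (x : V) : (subfms (term x)).card ≤ 3 := by
  have h1 := Finset.card_insert_le (or (lit x true) (lit x false))
    (subfms (lit x true) ∪ subfms (lit x false))
  have h2 := Finset.card_union_le (subfms (lit x true)) (subfms (lit x false))
  simp only [term, subfms, Finset.card_singleton] at *
  omega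

lemma card_subfms_chain :
    ∀ (x : V) (L : List V), (subfms (chain x L)).card ≤ 3 + 4 * L.length
  | x, [] => by simpa [chain] using card_subfms_term x
  | x, y :: ys => by
    have ih := card_subfms_chain y ys
    have h3 := card_subfms_term x
    have h1 := Finset.card_insert_le (and (term x) (chain y ys))
      (subfms (term x) ∪ subfms (chain y ys))
    have h2 := Finset.card_union_le (subfms (term x)) (subfms (chain y ys))
    simp only [chain, subfms, List.length_cons] at *
    omega

variable {C : NNF V}

lemma sat_sm (hC : ∀ α : V → Bool, sat α C = true) (α : V → Bool) :
    ∀ f : NNF V, sat α (sm C f) = sat α f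
  | lit x b => rfl
  | and f g => by simp [sm, sat, sat_sm hC α f, sat_sm hC α g]
  | or f g => by simp [sm, sat, hC α, sat_sm hC α f, sat_sm hC α g]

lemma vars_sm_subset : ∀ f : NNF V, vars (sm C f) ⊆ vars f ∪ vars C
  | lit x b => by simp [sm, vars]
  | and f g => by
    have hf := vars_sm_subset f
    have hg := vars_sm_subset g
    simp only [sm, vars]
    intro a ha
    simp only [Finset.mem_union] at *
    rcases ha with ha | ha
    · rcases Finset.mem_union.mp (hf ha) with h | h <;> tauto
    · rcases Finset.mem_union.mp (hg ha) with h | h <;> tauto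
  | or f g => by
    have hf := vars_sm_subset f
    have hg := vars_sm_subset g
    simp only [sm, vars]
    intro a ha
    simp only [Finset.mem_union] at *
    rcases ha with (ha | ha) | (ha | ha)
    · tauto
    · rcases Finset.mem_union.mp (hf ha) with h | h <;> tauto
    · tauto
    · rcases Finset.mem_union.mp (hg ha) with h | h <;> tauto

lemma subset_vars_sm : ∀ f : NNF V, vars f ⊆ vars (sm C f)
  | lit x b => by simp [sm, vars]
  | and f g => by
    have hf := subset_vars_sm f
    have hg := subset_vars_sm g
    simp only [sm, vars]
    exact Finset.union_subset_union hf hg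
  | or f g => by
    have hf := subset_vars_sm f
    have hg := subset_vars_sm g
    simp only [sm, vars]
    intro a ha
    simp only [Finset.mem_union] at *
    rcases ha with ha | ha
    · exact Or.inl (Or.inr (hf ha))
    · exact Or.inr (Or.inr (hg ha))

lemma smooth_sm (hC : Smooth C) : ∀ f : NNF V, vars f ⊆ vars C → Smooth (sm C f)
  | lit x b, _ => trivial
  | and f g, h => by
    simp only [vars, Finset.union_subset_iff] at h
    exact ⟨smooth_sm hC f h.1, smooth_sm hC g h.2⟩
  | or f g, h => by
    simp only [vars, Finset.union_subset_iff] at h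
    refine ⟨?_, ⟨hC, smooth_sm hC f h.1⟩, hC, smooth_sm hC g h.2⟩
    show vars C ∪ vars (sm C f) = vars C ∪ vars (sm C g)
    have h1 : vars C ∪ vars (sm C f) = vars C := by
      apply Finset.union_eq_left.mpr
      exact fun a ha => by
        rcases Finset.mem_union.mp (vars_sm_subset f ha) with h' | h'
        · exact h.1 h'
        · exact h'
    have h2 : vars C ∪ vars (sm C g) = vars C := by
      apply Finset.union_eq_left.mpr
      exact fun a ha => by
        rcases Finset.mem_union.mp (vars_sm_subset g ha) with h' | h'
        · exact h.2 h'
        · exact h'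
    rw [h1, h2]

lemma subfms_sm_subset :
    ∀ f : NNF V, subfms (sm C f) ⊆
      (subfms f).image (sm C) ∪ (subfms f).image (fun g => and C (sm C g)) ∪ subfms C
  | lit x b => by
    intro a ha
    simp only [sm, subfms, Finset.mem_singleton] at ha
    subst ha
    simp only [Finset.mem_union, Finset.mem_image]
    exact Or.inl (Or.inl ⟨lit x b, by simp [subfms, sm]⟩)
  | and f g => by
    have hf := subfms_sm_subset f
    have hg := subfms_sm_subset g
    intro a ha
    simp only [sm, subfms, Finset.mem_insert, Finset.mem_union] at ha
    rcases ha with rfl | ha | ha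
    · simp only [Finset.mem_union, Finset.mem_image]
      exact Or.inl (Or.inl ⟨and f g, mem_subfms_self _, rfl⟩)
    · rcases Finset.mem_union.mp (hf ha) with h | h
      · rcases Finset.mem_union.mp h with h | h
        · obtain ⟨b, hb, rfl⟩ := Finset.mem_image.mp h
          exact Finset.mem_union.mpr (Or.inl (Finset.mem_union.mpr (Or.inl
            (Finset.mem_image.mpr ⟨b, by simp [subfms]; tauto, rfl⟩))))
        · obtain ⟨b, hb, rfl⟩ := Finset.mem_image.mp h
          exact Finset.mem_union.mpr (Or.inl (Finset.mem_union.mpr (Or.inr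
            (Finset.mem_image.mpr ⟨b, by simp [subfms]; tauto, rfl⟩))))
      · exact Finset.mem_union.mpr (Or.inr h)
    · rcases Finset.mem_union.mp (hg ha) with h | h
      · rcases Finset.mem_union.mp h with h | h
        · obtain ⟨b, hb, rfl⟩ := Finset.mem_image.mp h
          exact Finset.mem_union.mpr (Or.inl (Finset.mem_union.mpr (Or.inl
            (Finset.mem_image.mpr ⟨b, by simp [subfms]; tauto, rfl⟩))))
        · obtain ⟨b, hb, rfl⟩ := Finset.mem_image.mp h
          exact Finset.mem_union.mpr (Or.inl (Finset.mem_union.mpr (Or.inr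
            (Finset.mem_image.mpr ⟨b, by simp [subfms]; tauto, rfl⟩))))
      · exact Finset.mem_union.mpr (Or.inr h)
  | or f g => by
    have hf := subfms_sm_subset f
    have hg := subfms_sm_subset g
    intro a ha
    simp only [sm, subfms, Finset.mem_insert, Finset.mem_union] at ha
    rcases ha with rfl | (rfl | ha | ha) | (rfl | ha | ha)
    · exact Finset.mem_union.mpr (Or.inl (Finset.mem_union.mpr (Or.inl
        (Finset.mem_image.mpr ⟨or f g, mem_subfms_self _, rfl⟩))))
    · exact Finset.mem_union.mpr (Or.inl (Finset.mem_union.mpr (Or.inr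
        (Finset.mem_image.mpr ⟨f, by simp [subfms, mem_subfms_self], rfl⟩))))
    · exact Finset.mem_union.mpr (Or.inr ha)
    · rcases Finset.mem_union.mp (hf ha) with h | h
      · rcases Finset.mem_union.mp h with h | h
        · obtain ⟨b, hb, rfl⟩ := Finset.mem_image.mp h
          exact Finset.mem_union.mpr (Or.inl (Finset.mem_union.mpr (Or.inl
            (Finset.mem_image.mpr ⟨b, by simp [subfms]; tauto, rfl⟩))))
        · obtain ⟨b, hb, rfl⟩ := Finset.mem_image.mp h
          exact Finset.mem_union.mpr (Or.inl (Finset.mem_union.mpr (Or.inr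
            (Finset.mem_image.mpr ⟨b, by simp [subfms]; tauto, rfl⟩))))
      · exact Finset.mem_union.mpr (Or.inr h)
    · exact Finset.mem_union.mpr (Or.inl (Finset.mem_union.mpr (Or.inr
        (Finset.mem_image.mpr ⟨g, by simp [subfms, mem_subfms_self], rfl⟩))))
    · exact Finset.mem_union.mpr (Or.inr ha)
    · rcases Finset.mem_union.mp (hg ha) with h | h
      · rcases Finset.mem_union.mp h with h | h
        · obtain ⟨b, hb, rfl⟩ := Finset.mem_image.mp h
          exact Finset.mem_union.mpr (Or.inl (Finset.mem_union.mpr (Or.inl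
            (Finset.mem_image.mpr ⟨b, by simp [subfms]; tauto, rfl⟩))))
        · obtain ⟨b, hb, rfl⟩ := Finset.mem_image.mp h
          exact Finset.mem_union.mpr (Or.inl (Finset.mem_union.mpr (Or.inr
            (Finset.mem_image.mpr ⟨b, by simp [subfms]; tauto, rfl⟩))))
      · exact Finset.mem_union.mpr (Or.inr h)

end lemmas

end NNF

/-- Smoothing size bound: any formula with `m` unique subformulas over `n`
variables can be smoothed---conjoining each disjunction branch with smoothing
terms `(x ∨ x̄)` for its missing variables---into an equivalent smooth formula
with at most `m·(2n+1) + 2n` unique subformulas. -/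
theorem smoothing_size_bound (V : Type) [Fintype V] [DecidableEq V]
    (φ : NNF V) :
    ∃ ψ : NNF V, ψ.Smooth ∧ (∀ α : V → Bool, ψ.sat α = φ.sat α) ∧
      ψ.vars = φ.vars ∧
      ψ.size ≤ φ.size * (2 * Fintype.card V + 1) + 2 * Fintype.card V := by
  classical
  by_cases h : φ.hasOr
  · -- φ contains a disjunction
    have hWne : (NNF.vars φ).Nonempty := NNF.vars_nonempty φ
    obtain ⟨x, L, hL⟩ : ∃ x L, (NNF.vars φ).toList = x :: L := by
      cases hT : (NNF.vars φ).toList with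
      | nil =>
        exfalso
        have : NNF.vars φ = ∅ := Finset.toList_eq_nil.mp hT
        exact Finset.not_nonempty_empty (this ▸ hWne)
      | cons x L => exact ⟨x, L, rfl⟩
    set C : NNF V := NNF.chain x L with hC
    have hvC : C.vars = φ.vars := by
      rw [hC, NNF.vars_chain, ← hL, Finset.toList_toFinset]
    refine ⟨NNF.sm C φ, ?_, ?_, ?_, ?_⟩
    · exact NNF.smooth_sm (NNF.smooth_chain x L) φ (by rw [hvC])
    · exact fun α => NNF.sat_sm (fun β => NNF.sat_chain β x L) α φ
    · apply Finset.Subset.antisymm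
      · intro a ha
        rcases Finset.mem_union.mp (NNF.vars_sm_subset φ ha) with h' | h'
        · exact h'
        · exact hvC ▸ h'
      · exact NNF.subset_vars_sm φ
    · -- size bound
      have hsub := NNF.subfms_sm_subset (C := C) φ
      have hcard : (NNF.sm C φ).size ≤
          φ.size + φ.size + (3 + 4 * L.length) := by
        have h1 := Finset.card_le_card hsub
        have h2 := Finset.card_union_le
          ((NNF.subfms φ).image (NNF.sm C) ∪ (NNF.subfms φ).image (fun g => NNF.and C (NNF.sm C g)))
          (NNF.subfms C)
        have h3 := Finset.card_union_le ((NNF.subfms φ).image (NNF.sm C))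
          ((NNF.subfms φ).image (fun g => NNF.and C (NNF.sm C g)))
        have h4 := Finset.card_image_le (s := NNF.subfms φ) (f := NNF.sm C)
        have h5 := Finset.card_image_le (s := NNF.subfms φ)
          (f := fun g => NNF.and C (NNF.sm C g))
        have h6 : (NNF.subfms C).card ≤ 3 + 4 * L.length := NNF.card_subfms_chain x L
        simp only [NNF.size] at *
        omega
      have hlen : L.length + 1 ≤ Fintype.card V := by
        have : (NNF.vars φ).toList.length = (NNF.vars φ).card := Finset.length_toList _
        rw [hL] at this
        have hle : (NNF.vars φ).card ≤ Fintype.card V := Finset.card_le_univ _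
        simp at this
        omega
      have hm2 : 2 ≤ φ.size := by
        obtain ⟨a, b, hab⟩ := NNF.exists_or_mem φ h
        obtain ⟨y, c, hyc⟩ := NNF.exists_lit_mem φ
        apply Finset.one_lt_card.mpr
        exact ⟨_, hab, _, hyc, by simp⟩
      set m := φ.size
      set n := Fintype.card V
      have hn1 : 1 ≤ n := by omega
      have key : 2 * n ≤ m * n := Nat.mul_le_mul_right n hm2
      have key2 : m * 1 ≤ m * n := Nat.mul_le_mul_left m hn1
      calc (NNF.sm C φ).size ≤ m + m + (3 + 4 * L.length) := hcard
        _ ≤ m * (2 * n + 1) + 2 * n := by nlinarith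
  · exact ⟨φ, NNF.smooth_of_not_hasOr φ h, fun _ => rfl, rfl,
      Nat.le_add_right_of_le (Nat.le_mul_of_pos_right _ (by omega))⟩
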